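/- Let T : ℝ^N → ℂ^M be a real analytic map, and view its Fréchet derivative at each point θ as an ℝ-linear map ℝ^N → ℂ^M ≅ ℝ^{2M}. If there exists θ₀ ∈ ℝ^N such that fderiv ℝ T θ₀ is surjective (i.e., the real Jacobian has rank 2M), then the set {θ ∈ ℝ^N : fderiv ℝ T θ is not surjective} has Lebesgue measure zero; that is, the real Jacobian has rank 2M for almost every θ ∈ ℝ^N. -/

import Mathlib

open MeasureTheory Matrix

lemma analytic1d_null (f : ℝ → ℝ) (hf : ∀ x, AnalyticAt ℝ f x) (a : ℝ) (ha : f a ≠ 0) :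
    volume {x | f x = 0} = 0 := by
  set S : Set ℝ := {x | f x = 0} with hS
  have hiso : ∀ z ∈ S, Sᶜ ∈ nhdsWithin z {z}ᶜ := by
    intro z hz
    rcases (hf z).eventually_eq_zero_or_eventually_ne_zero with h | h
    · have hA : AnalyticOnNhd ℝ f Set.univ := fun x _ => hf x
      exact absurd
        (hA.eqOn_zero_of_preconnected_of_eventuallyEq_zero
          isPreconnected_univ (Set.mem_univ z) h (Set.mem_univ a)) ha
    · exact h.mono fun w hw => by simpa [hS] using hw
  have hdisc : DiscreteTopology S := by
    rw [discreteTopology_subtype_iff]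
    intro x hx
    exact Filter.inf_principal_eq_bot.mpr (hiso x hx)
  have hcnt : S.Countable := by
    have : Countable ↥S := (TopologicalSpace.separableSpace_iff_countable).mp inferInstance
    exact Set.countable_coe_iff.mp this
  exact hcnt.measure_zero volume

lemma analytic_pi_null : ∀ (n : ℕ) (f : (Fin n → ℝ) → ℝ), (∀ x, AnalyticAt ℝ f x) →
    (∃ a, f a ≠ 0) → volume {x | f x = 0} = 0 := by
  intro n
  induction n with
  | zero =>
    intro f _ ⟨a, ha⟩
    have : {x : Fin 0 → ℝ | f x = 0} = ∅ := by
      ext x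
      simp [Subsingleton.elim x a, ha]
    simp [this]
  | succ n ih =>
    intro f hf ⟨a, ha⟩
    -- the cons map is analytic
    have hcons : ∀ q : ℝ × (Fin n → ℝ),
        AnalyticAt ℝ (fun p : ℝ × (Fin n → ℝ) => (Fin.cons p.1 p.2 : Fin (n+1) → ℝ)) q := by
      intro q
      apply AnalyticAt.pi
      intro i
      refine Fin.cases ?_ ?_ i
      · simpa using (analyticAt_fst : AnalyticAt ℝ (fun p : ℝ × (Fin n → ℝ) => p.1) q)
      · intro j
        simp only [Fin.cons_succ]
        exact analyticAt_pi_iff.mp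
          (analyticAt_snd : AnalyticAt ℝ (fun p : ℝ × (Fin n → ℝ) => p.2) q) j
    have hF : ∀ q : ℝ × (Fin n → ℝ),
        AnalyticAt ℝ (fun p : ℝ × (Fin n → ℝ) => f (Fin.cons p.1 p.2)) q :=
      fun q => (hf _).comp (hcons q)
    have hFc : Continuous (fun p : ℝ × (Fin n → ℝ) => f (Fin.cons p.1 p.2)) :=
      continuous_iff_continuousAt.mpr fun q => (hF q).continuousAt
    set Z : Set (ℝ × (Fin n → ℝ)) := {p | f (Fin.cons p.1 p.2) = 0} with hZdef
    have hZm : MeasurableSet Z := (isClosed_singleton.preimage hFc).measurableSet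
    -- transfer via the measurable equiv
    have hpres := MeasureTheory.volume_preserving_piFinSuccAbove (fun _ : Fin (n+1) => ℝ) 0
    have hpre : {x : Fin (n+1) → ℝ | f x = 0}
        = (MeasurableEquiv.piFinSuccAbove (fun _ : Fin (n+1) => ℝ) 0) ⁻¹' Z := by
      ext x
      have : (Fin.cons (x 0) (fun j => x ((0 : Fin (n+1)).succAbove j)) : Fin (n+1) → ℝ) = x := by
        simp [Fin.succAbove_zero]
        exact Fin.cons_self_tail x
      simp [MeasurableEquiv.piFinSuccAbove, hZdef, Fin.insertNthEquiv, this]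
    rw [hpre, hpres.measure_preimage hZm.nullMeasurableSet]
    -- Fubini
    rw [show (volume : Measure (ℝ × (Fin n → ℝ))) = (volume : Measure ℝ).prod volume from rfl,
      MeasureTheory.Measure.measure_prod_null hZm]
    -- bad set of first coordinates
    have hb : f (Fin.cons (a 0) (Fin.tail a)) ≠ 0 := by
      rwa [Fin.cons_self_tail]
    have hg : ∀ t : ℝ, AnalyticAt ℝ (fun s : ℝ => f (Fin.cons s (Fin.tail a))) t := by
      intro t
      exact (hF _).comp ((analyticAt_id).prod analyticAt_const)
    have hBnull : volume {t : ℝ | f (Fin.cons t (Fin.tail a)) = 0} = 0 :=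
      analytic1d_null _ hg (a 0) hb
    have hae : ∀ᵐ t : ℝ, f (Fin.cons t (Fin.tail a)) ≠ 0 := by
      rw [MeasureTheory.ae_iff]
      simpa using hBnull
    filter_upwards [hae] with t ht
    have hslice : ∀ z : Fin n → ℝ, AnalyticAt ℝ (fun z : Fin n → ℝ => f (Fin.cons t z)) z :=
      fun z => (hF _).comp (analyticAt_const.prod analyticAt_id)
    have := ih (fun z => f (Fin.cons t z)) hslice ⟨Fin.tail a, ht⟩
    simpa [hZdef, Set.preimage] using this

lemma analyticAt_matrix_det {E : Type*} [NormedAddCommGroup E] [NormedSpace ℝ E]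
    {ι : Type*} [Fintype ι] [DecidableEq ι] (P : E → Matrix ι ι ℝ) (x : E)
    (hP : ∀ i j, AnalyticAt ℝ (fun y => P y i j) x) :
    AnalyticAt ℝ (fun y => (P y).det) x := by
  have : (fun y => (P y).det)
      = fun y => ∑ σ : Equiv.Perm ι, ((Equiv.Perm.sign σ : ℤ) : ℝ) * ∏ i, P y (σ i) i := by
    funext y
    rw [Matrix.det_apply]
    simp [Units.smul_def, zsmul_eq_mul]
  rw [this]
  apply Finset.analyticAt_fun_sum
  intro σ _
  exact analyticAt_const.mul (Finset.analyticAt_fun_prod _ fun i _ => hP (σ i) i)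

lemma surjective_iff_det_ne_zero {E₁ E₂ : Type*} [AddCommGroup E₁] [Module ℝ E₁]
    [AddCommGroup E₂] [Module ℝ E₂] {n m : Type*} [Fintype n] [Fintype m]
    [DecidableEq n] [DecidableEq m]
    (B₁ : Module.Basis n ℝ E₁) (B₂ : Module.Basis m ℝ E₂) (L : E₁ →ₗ[ℝ] E₂) :
    Function.Surjective L ↔
      ((LinearMap.toMatrix B₁ B₂ L) * (LinearMap.toMatrix B₁ B₂ L)ᵀ).det ≠ 0 := by
  have : FiniteDimensional ℝ E₂ := Module.Basis.finiteDimensional_of_finite B₂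
  set A := LinearMap.toMatrix B₁ B₂ L with hA
  have hrank : A.rank = Module.finrank ℝ (LinearMap.range L) := by
    rw [Matrix.rank_eq_finrank_range_toLin A B₂ B₁, Matrix.toLin_toMatrix]
  have hsur : Function.Surjective L ↔ A.rank = Fintype.card m := by
    rw [hrank, ← LinearMap.range_eq_top]
    constructor
    · intro h
      rw [h, finrank_top, Module.finrank_eq_card_basis B₂]
    · intro h
      apply Submodule.eq_top_of_finrank_eq
      rw [h, Module.finrank_eq_card_basis B₂]
  have hAAt : (A * Aᵀ).rank = A.rank := Matrix.rank_self_mul_transpose A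
  have hdet : (A * Aᵀ).det ≠ 0 ↔ (A * Aᵀ).rank = Fintype.card m := by
    constructor
    · intro h
      exact Matrix.rank_of_isUnit _ ((Matrix.isUnit_iff_isUnit_det _).mpr (isUnit_iff_ne_zero.mpr h))
    · intro h
      have : LinearMap.range (A * Aᵀ).mulVecLin = ⊤ := by
        apply Submodule.eq_top_of_finrank_eq
        rw [← Matrix.rank]  -- rank def
        rw [h, Module.finrank_pi]
      have hs : Function.Surjective ((A * Aᵀ).mulVec) :=
        LinearMap.range_eq_top.mp this
      have := Matrix.mulVec_surjective_iff_isUnit.mp hs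
      exact isUnit_iff_ne_zero.mp ((Matrix.isUnit_iff_isUnit_det _).mp this)
  rw [hsur, ← hAAt, hdet]

lemma analytic_euclidean_null (N : ℕ) (f : EuclideanSpace ℝ (Fin N) → ℝ)
    (hf : ∀ θ, AnalyticAt ℝ f θ) (θ₀ : EuclideanSpace ℝ (Fin N)) (h0 : f θ₀ ≠ 0) :
    volume {θ | f θ = 0} = 0 := by
  set φ : (Fin N → ℝ) ≃L[ℝ] EuclideanSpace ℝ (Fin N) :=
    (PiLp.continuousLinearEquiv 2 ℝ (fun _ : Fin N => ℝ)).symm with hφ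
  have hg : ∀ x : Fin N → ℝ, AnalyticAt ℝ (fun x => f (φ x)) x :=
    fun x => (hf _).comp ((φ : (Fin N → ℝ) →L[ℝ] EuclideanSpace ℝ (Fin N)).analyticAt x)
  have hgc : Continuous (fun x : Fin N → ℝ => f (φ x)) :=
    continuous_iff_continuousAt.mpr fun x => (hg x).continuousAt
  have hm : MeasurableSet {x : Fin N → ℝ | f (φ x) = 0} :=
    (isClosed_singleton.preimage hgc).measurableSet
  have hnull : volume {x : Fin N → ℝ | f (φ x) = 0} = 0 :=
    analytic_pi_null N _ hg ⟨φ.symm θ₀, by simpa using h0⟩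
  have hpre : {θ : EuclideanSpace ℝ (Fin N) | f θ = 0}
      = (MeasurableEquiv.toLp 2 (Fin N → ℝ)).symm ⁻¹' {x | f (φ x) = 0} := by
    ext θ
    have : φ ((MeasurableEquiv.toLp 2 (Fin N → ℝ)).symm θ) = θ := rfl
    simp only [Set.mem_preimage, Set.mem_setOf_eq, this]
  rw [hpre,
    (EuclideanSpace.volume_preserving_symm_measurableEquiv_toLp (Fin N)).measure_preimage
      hm.nullMeasurableSet, hnull]

/-- **Lemma 1 (rank preservation almost everywhere).**
If `T : ℝ^N → ℂ^M` is real analytic and its real Fréchet derivative is surjective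
(rank `2M`) at one point `θ₀`, then the set of points where it fails to be surjective has
Lebesgue measure zero. -/
theorem rank_preservation_ae (N M : ℕ)
    (T : EuclideanSpace ℝ (Fin N) → EuclideanSpace ℂ (Fin M))
    (hT_analytic : ∀ θ, AnalyticAt ℝ T θ)
    (θ₀ : EuclideanSpace ℝ (Fin N))
    (hsurj : Function.Surjective (fderiv ℝ T θ₀)) :
    volume {θ : EuclideanSpace ℝ (Fin N) |
      ¬ Function.Surjective (fderiv ℝ T θ)} = 0 := by
  classical
  let E := EuclideanSpace ℝ (Fin N)
  let F := EuclideanSpace ℂ (Fin M)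
  set B₁ : Module.Basis (Fin N) ℝ E := (EuclideanSpace.basisFun (Fin N) ℝ).toBasis with hB₁
  set B₂ : Module.Basis ((_ : Fin M) × Fin 2) ℝ F :=
    (Pi.basis fun _ : Fin M => Complex.basisOneI).map
      (WithLp.linearEquiv 2 ℝ (Fin M → ℂ)).symm with hB₂
  set A : E → Matrix ((_ : Fin M) × Fin 2) (Fin N) ℝ :=
    fun θ => LinearMap.toMatrix B₁ B₂ ((fderiv ℝ T θ) : E →ₗ[ℝ] F) with hA
  set f : E → ℝ := fun θ => ((A θ) * (A θ)ᵀ).det with hf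
  -- analyticity of the matrix entries
  have hAan : ∀ (i : (_ : Fin M) × Fin 2) (j : Fin N) (θ₁ : E),
      AnalyticAt ℝ (fun θ => A θ i j) θ₁ := by
    intro i j θ₁
    have hd : AnalyticAt ℝ (fderiv ℝ T) θ₁ := (hT_analytic θ₁).fderiv
    set c : F →L[ℝ] ℝ := LinearMap.toContinuousLinearMap (B₂.coord i) with hc
    set app : (E →L[ℝ] F) →L[ℝ] F := ContinuousLinearMap.apply ℝ F (B₁ j) with happ
    have : (fun θ => A θ i j) = (c.comp app) ∘ (fderiv ℝ T) := by
      funext θ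
      simp [hA, LinearMap.toMatrix_apply, hc, happ, Module.Basis.coord_apply]
    rw [this]
    exact ((c.comp app).analyticAt _).comp hd
  -- analyticity of f
  have hfan : ∀ θ₁ : E, AnalyticAt ℝ f θ₁ := by
    intro θ₁
    apply analyticAt_matrix_det
    intro i k
    have : (fun θ => ((A θ) * (A θ)ᵀ) i k) = fun θ => ∑ j, A θ i j * A θ k j := by
      funext θ
      simp [Matrix.mul_apply]
    rw [this]
    exact Finset.analyticAt_fun_sum _ fun j _ => (hAan i j θ₁).mul (hAan k j θ₁)
  -- surjectivity criterion
  have hcrit : ∀ θ : E, Function.Surjective (fderiv ℝ T θ) ↔ f θ ≠ 0 := by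
    intro θ
    exact surjective_iff_det_ne_zero B₁ B₂ ((fderiv ℝ T θ) : E →ₗ[ℝ] F)
  have hset : {θ : E | ¬ Function.Surjective (fderiv ℝ T θ)} = {θ : E | f θ = 0} := by
    ext θ
    simp [hcrit θ]
  rw [hset]
  exact analytic_euclidean_null N f hfan θ₀ ((hcrit θ₀).mp hsurj)
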